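/- arXiv:1710.07836 — 2 statements merged into one kernel-verified Lean document; each statement's English description precedes it below -/
import Mathlib

section
/- Let N be a temporal rooted phylogenetic network on X. Then N is tree-based if and only if N satisfies the antichain-to-leaf property. -/
open Relation

/-- Out-degree of a vertex in a digraph given by its arc relation. -/
noncomputable def outDeg {V : Type*} (A : V → V → Prop) (v : V) : ℕ := {u | A v u}.ncard
/-- In-degree of a vertex in a digraph given by its arc relation. -/
noncomputable def inDeg {V : Type*} (A : V → V → Prop) (v : V) : ℕ := {u | A u v}.ncard

/-- A rooted phylogenetic network on leaf set `X`. -/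
structure PhyloNet (V : Type*) [Fintype V] [DecidableEq V] where
  Arc : V → V → Prop
  root : V
  X : Finset V
  acyclic : ∀ v, ¬ Relation.TransGen Arc v v
  reach : ∀ v, Relation.ReflTransGen Arc root v
  root_out : 1 ≤ outDeg Arc root
  leaf_iff : ∀ v, v ∈ X ↔ outDeg Arc v = 0
  leaf_in : ∀ v ∈ X, inDeg Arc v = 1
  internal : ∀ v, v ≠ root → v ∉ X →
    (inDeg Arc v = 1 ∧ 2 ≤ outDeg Arc v) ∨ (2 ≤ inDeg Arc v ∧ outDeg Arc v = 1)

section Defs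
variable {V : Type*} [Fintype V] [DecidableEq V]

/-- A reticulation: in-degree at least two. -/
def IsRetic (N : PhyloNet V) (v : V) : Prop := 2 ≤ inDeg N.Arc v
/-- A tree vertex: a non-leaf vertex of in-degree at most one. -/
def IsTreeVert (N : PhyloNet V) (v : V) : Prop := v ∉ N.X ∧ inDeg N.Arc v ≤ 1
/-- An omnian: a non-leaf vertex all of whose children are reticulations. -/
def IsOmnian (N : PhyloNet V) (v : V) : Prop := v ∉ N.X ∧ ∀ u, N.Arc v u → IsRetic N u
/-- A binary network: all in- and out-degrees are at most two. -/
def IsBinary (N : PhyloNet V) : Prop := ∀ v : V, inDeg N.Arc v ≤ 2 ∧ outDeg N.Arc v ≤ 2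

/-- A rooted spanning tree of `N` with the same root as `N`. -/
def IsRSTree (N : PhyloNet V) (T : V → V → Prop) : Prop :=
  (∀ u v, T u v → N.Arc u v) ∧ (∀ v, inDeg T v = 0 ↔ v = N.root) ∧
  (∀ v, v ≠ N.root → inDeg T v = 1)

/-- A support tree: a rooted spanning tree with the same root, all of whose leaves are in `X`. -/
def IsSupportTree (N : PhyloNet V) (T : V → V → Prop) : Prop :=
  IsRSTree N T ∧ ∀ v, outDeg T v = 0 → v ∈ N.X

/-- Tree-based network. -/
def TreeBased (N : PhyloNet V) : Prop := ∃ T, IsSupportTree N T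

/-- A (nonempty, repetition-free) directed path recorded as a list of vertices. -/
def IsPathIn (A : V → V → Prop) (p : List V) : Prop := p ≠ [] ∧ p.Chain' A ∧ p.Nodup
/-- The path ends at a vertex of `X`. -/
def EndsIn (X : Finset V) (p : List V) : Prop := ∃ x ∈ X, p.getLast? = some x
/-- Pairwise vertex-disjoint family of paths. -/
def PairwiseDisj (P : Finset (List V)) : Prop :=
  ∀ p ∈ P, ∀ q ∈ P, p ≠ q → ∀ v : V, v ∈ p → v ∉ q
/-- A partition of the vertex set of `N` into vertex-disjoint directed paths
ending at leaves in `X`. -/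
def IsPathPartition (N : PhyloNet V) (P : Finset (List V)) : Prop :=
  (∀ p ∈ P, IsPathIn N.Arc p ∧ EndsIn N.X p) ∧ PairwiseDisj P ∧ ∀ v : V, ∃ p ∈ P, v ∈ p

/-- A matching in the bipartite graph with edge set `E` (edges from a first copy of `V`
to a second copy of `V`), recorded as a set of edges no two of which share an endpoint. -/
def IsMatchingOn (E : V → V → Prop) (M : Finset (V × V)) : Prop :=
  (∀ e ∈ M, E e.1 e.2) ∧ ∀ e ∈ M, ∀ f ∈ M, (e.1 = f.1 ∨ e.2 = f.2) → e = f

/-- Size of a maximum matching of the bipartite graph with edge set `E`. -/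
noncomputable def maxMatching (E : V → V → Prop) : ℕ :=
  sSup {n | ∃ M : Finset (V × V), IsMatchingOn E M ∧ M.card = n}

/-- An antichain of vertices of `N`. -/
def AntichainIn (N : PhyloNet V) (S : Finset V) : Prop :=
  ∀ u ∈ S, ∀ v ∈ S, u ≠ v → ¬ Relation.TransGen N.Arc u v

/-- The antichain-to-leaf property: from every antichain there are pairwise
vertex-disjoint directed paths to leaves, one starting at each antichain element. -/
def AntichainToLeaf (N : PhyloNet V) : Prop :=
  ∀ S : Finset V, AntichainIn N S →
    ∃ f : V → List V,
      (∀ s ∈ S, IsPathIn N.Arc (f s) ∧ (f s).head? = some s ∧ EndsIn N.X (f s)) ∧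
      ∀ s ∈ S, ∀ t ∈ S, s ≠ t → ∀ v : V, v ∈ f s → v ∉ f t

/-- A temporal network: a real labelling strictly increasing along tree arcs and
constant along reticulation arcs. -/
def Temporal (N : PhyloNet V) : Prop :=
  ∃ l : V → ℝ, ∀ u v, N.Arc u v →
    (IsRetic N v → l u = l v) ∧ (¬ IsRetic N v → l u < l v)

/-- `N'` is a binary refinement of `N`, witnessed by the contraction map `φ`:
`N` is obtained from the binary network `N'` by contracting the arcs whose endpoints
are identified by `φ`. -/
def IsBinRefinement {V' : Type*} [Fintype V'] [DecidableEq V']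
    (N' : PhyloNet V') (N : PhyloNet V) (φ : V' → V) : Prop :=
  IsBinary N' ∧ Function.Surjective φ ∧ φ N'.root = N.root ∧
  N'.X.image φ = N.X ∧ Set.InjOn φ ↑N'.X ∧
  (∀ u v : V, N.Arc u v ↔ ∃ u' v', φ u' = u ∧ φ v' = v ∧ N'.Arc u' v' ∧ φ u' ≠ φ v') ∧
  (∀ a b : V', φ a = φ b →
    Relation.ReflTransGen (fun x y => (N'.Arc x y ∨ N'.Arc y x) ∧ φ x = φ y) a b)

/-- Edge of the bipartite graph `B_N` between omnians and reticulations. -/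
def BEdge (N : PhyloNet V) (o r : V) : Prop := IsOmnian N o ∧ IsRetic N r ∧ N.Arc o r
/-- Edge of the bipartite graph `Z_N` between tree vertices with a reticulation child
and reticulations. -/
def ZEdge (N : PhyloNet V) (t r : V) : Prop :=
  IsTreeVert N t ∧ (∃ r', N.Arc t r' ∧ IsRetic N r') ∧ IsRetic N r ∧ N.Arc t r

/-- `R_t`: reticulations with no reticulation parent. -/
def Rt (N : PhyloNet V) (v : V) : Prop := IsRetic N v ∧ ∀ u, N.Arc u v → ¬ IsRetic N u
/-- `Q_t`: vertices with a child in `R_t`. -/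
def Qt (N : PhyloNet V) (v : V) : Prop := ∃ r, N.Arc v r ∧ Rt N r
/-- Edge of the bipartite graph `J_N`. -/
def JEdge (N : PhyloNet V) (q r : V) : Prop := Qt N q ∧ Rt N r ∧ N.Arc q r

/-- A supporting set for `J_N`. -/
def IsSupportingSet (N : PhyloNet V) (E : Finset (V × V)) : Prop :=
  (∀ e ∈ E, JEdge N e.1 e.2) ∧
  (∀ q, Qt N q → IsOmnian N q → ∃ e ∈ E, e.1 = q) ∧
  (∀ r, Rt N r → ∃! e : V × V, e ∈ E ∧ e.2 = r)

/-- An arboreal arc: `u` is a reticulation, or `v` is a tree vertex or a leaf. -/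
def ArborealArc (N : PhyloNet V) (u v : V) : Prop :=
  N.Arc u v ∧ (IsRetic N u ∨ ¬ IsRetic N v)

/-- The number of support trees of `N`, identified with their arc sets. -/
noncomputable def supCount (N : PhyloNet V) : ℕ :=
  {A' : Finset (V × V) | IsSupportTree N (fun u v => (u, v) ∈ A')}.ncard

/-- The bipartite graph `J_N`, as a simple graph on `Q_t ∪ R_t`. -/
def Jgraph (N : PhyloNet V) : SimpleGraph {v : V // Qt N v ∨ Rt N v} where
  Adj a b := JEdge N a.1 b.1 ∨ JEdge N b.1 a.1
  symm := by constructor; intro a b h; tauto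
  loopless := by
    constructor; rintro a (⟨_, _, h⟩ | ⟨_, _, h⟩) <;> exact N.acyclic _ (Relation.TransGen.single h)

/-- Degree in `J_N`. -/
noncomputable def Jdeg (N : PhyloNet V) (a : {v : V // Qt N v ∨ Rt N v}) : ℕ :=
  ((Jgraph N).neighborSet a).ncard

end Defs

/-- A rooted tree (equivalently, a subdivision of a rooted tree): a rooted digraph
in which every non-root vertex has in-degree one and everything is reachable
from the root. -/
structure RootedDirTree (V : Type*) [Fintype V] [DecidableEq V] where
  Arc : V → V → Prop
  root : V
  acyclic : ∀ v, ¬ Relation.TransGen Arc v v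
  reach : ∀ v, Relation.ReflTransGen Arc root v
  root_in : inDeg Arc root = 0
  in_one : ∀ v, v ≠ root → inDeg Arc v = 1

set_option linter.unusedSectionVars false
set_option maxHeartbeats 1000000


section Abstract
variable {V : Type*} [Fintype V] [DecidableEq V] {A : V → V → Prop} {P : V → Prop}

lemma wf_fwd (hacyc : ∀ v, ¬ TransGen A v v) : WellFounded (TransGen A) := by
  haveI : IsTrans V (TransGen A) := ⟨fun a b c h1 h2 => h1.trans h2⟩
  haveI : IsIrrefl V (TransGen A) := ⟨hacyc⟩
  exact Finite.wellFounded_of_trans_of_irrefl _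

lemma wf_down (hacyc : ∀ v, ¬ TransGen A v v) : WellFounded (fun a b => A b a) := by
  have h : WellFounded (fun a b => TransGen A b a) := by
    haveI : IsTrans V (fun a b => TransGen A b a) := ⟨fun a b c h1 h2 => h2.trans h1⟩
    haveI : IsIrrefl V (fun a b => TransGen A b a) := ⟨hacyc⟩
    exact Finite.wellFounded_of_trans_of_irrefl _
  exact Subrelation.wf (fun h => TransGen.single h) h

variable (A P) in
def StepR : V → V → Prop := fun x y => P x ∧ A x y

lemma chain_next {x w : V} : ∀ (l : List V), l.Chain' A → x ∈ l → l.getLast? = some w → x ≠ w →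
    ∃ y ∈ l, A x y := by
  intro l
  induction l with
  | nil => intro _ h; simp at h
  | cons a tl ih =>
    intro hc hx hlast hne
    cases tl with
    | nil =>
      simp at hx hlast
      exact absurd (hx.trans hlast) hne
    | cons b tl2 =>
      rcases List.mem_cons.mp hx with rfl | hx2
      · exact ⟨b, List.mem_cons_of_mem _ List.mem_cons_self, (List.isChain_cons_cons.mp hc).1⟩
      · have hlast2 : (b :: tl2).getLast? = some w := by
          rwa [List.getLast?_cons_cons] at hlast
        obtain ⟨y, hy, hxy⟩ := ih (List.isChain_cons_cons.mp hc).2 hx2 hlast2 hne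
        exact ⟨y, List.mem_cons_of_mem _ hy, hxy⟩

lemma stepr_rtg_transGen {a b : V} (h : ReflTransGen (StepR A P) a b) (hne : a ≠ b) :
    TransGen A a b := by
  have h2 : ReflTransGen A a b := ReflTransGen.mono (fun _ _ h => h.2) _ _ h
  rcases h2.cases_head with rfl | ⟨c, hac, hcb⟩
  · exact absurd rfl hne
  · exact TransGen.head' hac hcb

lemma term_unique (hacyc : ∀ v, ¬ TransGen A v v)
    (hdet : ∀ x, P x → ∀ a b, A x a → A x b → a = b) :
    ∀ x y1 y2 : V, ReflTransGen (StepR A P) x y1 → P y1 → (∀ z, A y1 z → ¬ P z) →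
      ReflTransGen (StepR A P) x y2 → (P y2) → (∀ z, A y2 z → ¬ P z) → y1 = y2 := by
  intro x
  induction x using (wf_down hacyc).induction with
  | _ x ih =>
    intro y1 y2 h1 hp1 ht1 h2 hp2 ht2
    rcases h1.cases_head with rfl | ⟨c, hxc, hcy1⟩
    · rcases h2.cases_head with rfl | ⟨c, hxc, hcy2⟩
      · rfl
      · exfalso
        rcases hcy2.cases_head with rfl | ⟨d, hcd, _⟩
        · exact ht1 _ hxc.2 hp2
        · exact ht1 _ hxc.2 hcd.1
    · rcases h2.cases_head with rfl | ⟨c', hxc', hcy2⟩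
      · exfalso
        rcases hcy1.cases_head with rfl | ⟨d, hcd, _⟩
        · exact ht2 _ hxc.2 hp1
        · exact ht2 _ hxc.2 hcd.1
      · have hcc : c = c' := hdet x hxc.1 _ _ hxc.2 hxc'.2
        subst hcc
        exact ih c hxc.2 y1 y2 hcy1 hp1 ht1 hcy2 hp2 ht2

lemma orbit_dich (hdet : ∀ x, P x → ∀ a b, A x a → A x b → a = b) {x a b : V}
    (h1 : ReflTransGen (StepR A P) x a) (h2 : ReflTransGen (StepR A P) x b) :
    ReflTransGen (StepR A P) a b ∨ ReflTransGen (StepR A P) b a := by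
  induction h1 using ReflTransGen.head_induction_on with
  | refl => exact Or.inl h2
  | head hxc hca ih =>
    rename_i x' c
    rcases h2.cases_head with rfl | ⟨c', hxc', hcb⟩
    · exact Or.inr (ReflTransGen.head hxc hca)
    · have : c = c' := hdet x' hxc.1 _ _ hxc.2 hxc'.2
      exact ih (this ▸ hcb)

lemma t_const (hacyc : ∀ v, ¬ TransGen A v v)
    (hdet : ∀ x, P x → ∀ a b, A x a → A x b → a = b) (t : V → V)
    (htorb : ∀ x, P x → ReflTransGen (StepR A P) x (t x) ∧ P (t x) ∧ ∀ z, A (t x) z → ¬ P z)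
    {x y : V} (hx : P x) (hy : P y) (hxy : ReflTransGen (StepR A P) x y) : t x = t y := by
  obtain ⟨o1, p1, tm1⟩ := htorb x hx
  obtain ⟨o2, p2, tm2⟩ := htorb y hy
  exact term_unique hacyc hdet x (t x) (t y) o1 p1 tm1 (hxy.trans o2) p2 tm2

lemma counting (hacyc : ∀ v, ¬ TransGen A v v)
    (hdet : ∀ x, P x → ∀ a b, A x a → A x b → a = b) (t : V → V)
    (htorb : ∀ x, P x → ReflTransGen (StepR A P) x (t x) ∧ P (t x) ∧ ∀ z, A (t x) z → ¬ P z) :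
    ∀ (n : ℕ) (C D : Finset V), D.card = n → (∀ c ∈ C, P c) → (∀ d ∈ D, P d) →
      (∀ d ∈ D, ∃ z, A d z ∧ z ∈ C) →
      (∀ d ∈ D, ∃ r ∈ C, ReflTransGen (StepR A P) r d) →
      (C.image t).card + D.card ≤ C.card := by
  intro n
  induction n using Nat.strong_induction_on with
  | _ n ih =>
    intro C D hcard hCP hDP hchild hwit
    rcases D.eq_empty_or_nonempty with rfl | hDne
    · simpa using Finset.card_image_le
    · obtain ⟨d0, hd0D, hd0min⟩ := (wf_fwd hacyc).has_min ↑D (Finset.coe_nonempty.mpr hDne)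
      obtain ⟨r0, hr0C, hr0d0⟩ := hwit d0 hd0D
      obtain ⟨z0, hz0arc, hz0C⟩ := hchild d0 hd0D
      have hPd0 := hDP d0 hd0D
      have hz0ne : z0 ≠ r0 := by
        rintro rfl
        exact hacyc d0 (TransGen.head' hz0arc (ReflTransGen.mono (fun _ _ h => h.2) _ _ hr0d0))
      have hchild' : ∀ d ∈ D.erase d0, ∃ z, A d z ∧ z ∈ C.erase r0 := by
        intro d hd
        obtain ⟨hdne, hdD⟩ := Finset.mem_erase.mp hd
        obtain ⟨z, hz1, hz2⟩ := hchild d hdD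
        refine ⟨z, hz1, Finset.mem_erase.mpr ⟨?_, hz2⟩⟩
        rintro rfl
        exact hd0min d hdD (TransGen.head' hz1 (ReflTransGen.mono (fun _ _ h => h.2) _ _ hr0d0))
      have hwit' : ∀ d ∈ D.erase d0, ∃ r ∈ C.erase r0, ReflTransGen (StepR A P) r d := by
        intro d hd
        obtain ⟨hdne, hdD⟩ := Finset.mem_erase.mp hd
        obtain ⟨r, hrC, hrd⟩ := hwit d hdD
        by_cases hrr : r = r0
        · subst hrr
          rcases orbit_dich hdet hrd hr0d0 with hdd0 | hd0d
          · exact absurd (stepr_rtg_transGen hdd0 hdne) (hd0min d hdD)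
          · rcases hd0d.cases_head with heq | ⟨w, hw1, hw2⟩
            · exact absurd heq.symm hdne
            · have hwz : w = z0 := hdet d0 hPd0 _ _ hw1.2 hz0arc
              subst hwz
              exact ⟨w, Finset.mem_erase.mpr ⟨hz0ne, hz0C⟩, hw2⟩
        · exact ⟨r, Finset.mem_erase.mpr ⟨hrr, hrC⟩, hrd⟩
      have himg : C.image t ⊆ (C.erase r0).image t := by
        intro y hy
        obtain ⟨c, hcC, rfl⟩ := Finset.mem_image.mp hy
        by_cases hcr : c = r0
        · subst hcr
          have e1 : t c = t d0 := t_const hacyc hdet t htorb (hCP _ hr0C) hPd0 hr0d0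
          have e2 : t d0 = t z0 := t_const hacyc hdet t htorb hPd0 (hCP _ hz0C)
            (ReflTransGen.single ⟨hPd0, hz0arc⟩)
          rw [e1, e2]
          exact Finset.mem_image_of_mem t (Finset.mem_erase.mpr ⟨hz0ne, hz0C⟩)
        · exact Finset.mem_image_of_mem t (Finset.mem_erase.mpr ⟨hcr, hcC⟩)
      have hC'card : (C.erase r0).card = C.card - 1 := Finset.card_erase_of_mem hr0C
      have hD'card : (D.erase d0).card = D.card - 1 := Finset.card_erase_of_mem hd0D
      have hCpos : 1 ≤ C.card := Finset.card_pos.mpr ⟨r0, hr0C⟩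
      have hDpos : 1 ≤ D.card := Finset.card_pos.mpr ⟨d0, hd0D⟩
      have hlt : (D.erase d0).card < n := by omega
      have hrec := ih (D.erase d0).card hlt (C.erase r0) (D.erase d0) rfl
        (fun c hc => hCP c (Finset.mem_of_mem_erase hc))
        (fun d hd => hDP d (Finset.mem_of_mem_erase hd)) hchild' hwit'
      have h2 := Finset.card_le_card himg
      omega

lemma t_in_path (hacyc : ∀ v, ¬ TransGen A v v)
    (hdet : ∀ x, P x → ∀ a b, A x a → A x b → a = b) (t : V → V)
    (htorb : ∀ x, P x → ReflTransGen (StepR A P) x (t x) ∧ P (t x) ∧ ∀ z, A (t x) z → ¬ P z) :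
    ∀ x, P x → ∀ l : List V, l.Chain' A → x ∈ l → (∀ y, P y → l.getLast? ≠ some y) →
      t x ∈ l := by
  intro x
  induction x using (wf_down hacyc).induction with
  | _ x ih =>
    intro hx l hchain hxl hlast
    by_cases hterm : ∀ z, A x z → ¬ P z
    · have htx : t x = x := by
        rcases (htorb x hx).1.cases_head with heq | ⟨c, hc1, hc2⟩
        · exact heq.symm
        · exfalso
          rcases hc2.cases_head with rfl | ⟨d, hd1, _⟩
          · exact hterm _ hc1.2 (htorb x hx).2.1
          · exact hterm _ hc1.2 hd1.1
      rwa [htx]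
    · push_neg at hterm
      obtain ⟨z, hxz, hPz⟩ := hterm
      obtain ⟨w, hw⟩ : ∃ w, l.getLast? = some w := by
        cases hl? : l.getLast? with
        | some w => exact ⟨w, rfl⟩
        | none =>
          rw [List.getLast?_eq_none_iff] at hl?
          subst hl?
          simp at hxl
      have hxw : x ≠ w := by
        intro heq
        exact hlast x hx (by rw [hw, heq])
      obtain ⟨y, hyl, hxy⟩ := chain_next l hchain hxl hw hxw
      have hzy : z = y := hdet x hx _ _ hxz hxy
      subst hzy
      have htxy : t x = t z := t_const hacyc hdet t htorb hx hPz
        (ReflTransGen.single ⟨hx, hxy⟩)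
      rw [htxy]
      exact ih z hxy hPz l hchain hyl hlast
end Abstract


lemma exists_term {V : Type*} [Fintype V] [DecidableEq V] {A : V → V → Prop} {P : V → Prop}
    (hacyc : ∀ v, ¬ Relation.TransGen A v v) :
    ∀ x : V, ∃ y, P x → (Relation.ReflTransGen (StepR A P) x y ∧ P y ∧ ∀ z, A y z → ¬ P z) := by
  intro x
  induction x using (wf_down hacyc).induction with
  | _ x ih =>
    by_cases hx : P x
    · by_cases hterm : ∀ z, A x z → ¬ P z
      · exact ⟨x, fun _ => ⟨Relation.ReflTransGen.refl, hx, hterm⟩⟩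
      · push_neg at hterm
        obtain ⟨z, hxz, hz⟩ := hterm
        obtain ⟨y, hy⟩ := ih z hxz
        obtain ⟨h1, h2, h3⟩ := hy hz
        exact ⟨y, fun _ => ⟨Relation.ReflTransGen.head ⟨hx, hxz⟩ h1, h2, h3⟩⟩
    · exact ⟨x, fun h => absurd h hx⟩

section PhyloHelpers
variable {V : Type*} [Fintype V] [DecidableEq V] {N : PhyloNet V}

lemma rtg_ne_transGen' {A : V → V → Prop} {a b : V} (h : Relation.ReflTransGen A a b)
    (hne : a ≠ b) : Relation.TransGen A a b := by
  rcases h.cases_head with rfl | ⟨c, hac, hcb⟩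
  · exact absurd rfl hne
  · exact Relation.TransGen.head' hac hcb

lemma chain'_nodup {A : V → V → Prop} (hacyc : ∀ v, ¬ Relation.TransGen A v v) {l : List V}
    (hl : l.Chain' A) : l.Nodup := by
  haveI : IsTrans V (Relation.TransGen A) := ⟨fun a b c h1 h2 => h1.trans h2⟩
  have h2 : l.Chain' (Relation.TransGen A) :=
    List.IsChain.imp (fun a b h => Relation.TransGen.single h) hl
  have h3 : l.Pairwise (Relation.TransGen A) := List.isChain_iff_pairwise.mp h2
  exact List.Pairwise.imp (fun h => fun he => hacyc _ (he ▸ h)) h3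


lemma root_no_in {u : V} (h : N.Arc u N.root) : False :=
  N.acyclic N.root (Relation.TransGen.tail' (N.reach u) h)

lemma child_ne_root {u v : V} (h : N.Arc u v) : v ≠ N.root := fun he => root_no_in (he ▸ h)

lemma indeg_root : inDeg N.Arc N.root = 0 := by
  have : {u | N.Arc u N.root} = ∅ := by
    ext u; simp only [Set.mem_setOf_eq, Set.mem_empty_iff_false, iff_false]
    exact fun h => root_no_in h
  simp [inDeg, this]

lemma exists_parent {v : V} (hv : v ≠ N.root) : ∃ u, N.Arc u v := by
  have h1 : 1 ≤ inDeg N.Arc v := by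
    by_cases hx : v ∈ N.X
    · rw [N.leaf_in v hx]
    · rcases N.internal v hv hx with ⟨h, _⟩ | ⟨h, _⟩ <;> omega
  have := (Set.ncard_pos (Set.toFinite _)).mp (by exact h1 : 0 < inDeg N.Arc v)
  exact this

lemma exists_child {v : V} (hv : v ∉ N.X) : ∃ u, N.Arc v u := by
  have h0 : outDeg N.Arc v ≠ 0 := fun h => hv ((N.leaf_iff v).mpr h)
  have := (Set.ncard_pos (Set.toFinite _)).mp (by omega : 0 < outDeg N.Arc v)
  exact this

lemma retic_not_leaf {v : V} (h : IsRetic N v) : v ∉ N.X := by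
  intro hx
  have := N.leaf_in v hx
  unfold IsRetic at h
  omega

lemma retic_ne_root {v : V} (h : IsRetic N v) : v ≠ N.root := by
  intro he
  subst he
  have := indeg_root (N := N)
  unfold IsRetic at h
  omega

lemma retic_outdeg_one {v : V} (h : IsRetic N v) : outDeg N.Arc v = 1 := by
  rcases N.internal v (retic_ne_root h) (retic_not_leaf h) with ⟨h1, _⟩ | ⟨_, h2⟩
  · unfold IsRetic at h; omega
  · exact h2

lemma retic_det {x : V} (h : IsRetic N x) {a b : V} (ha : N.Arc x a) (hb : N.Arc x b) :
    a = b := by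
  obtain ⟨c, hc⟩ := Set.ncard_eq_one.mp (retic_outdeg_one h)
  have h1 : a ∈ {u | N.Arc x u} := ha
  have h2 : b ∈ {u | N.Arc x u} := hb
  rw [hc] at h1 h2
  exact h1.trans h2.symm

lemma retic_of_two_parents {s s' v : V} (h1 : N.Arc s v) (h2 : N.Arc s' v) (hne : s ≠ s') :
    IsRetic N v := by
  have hsub : {s, s'} ⊆ {u | N.Arc u v} := by
    intro u hu
    rcases hu with rfl | hu
    · exact h1
    · rcases hu with rfl; exact h2
  have := Set.ncard_le_ncard hsub (Set.toFinite _)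
  rw [Set.ncard_pair hne] at this
  exact this

section Temporal
variable {l : V → ℝ}
  (hl : ∀ u v, N.Arc u v → (IsRetic N v → l u = l v) ∧ (¬ IsRetic N v → l u < l v))

include hl

lemma arc_label_le {u v : V} (h : N.Arc u v) : l u ≤ l v := by
  by_cases hr : IsRetic N v
  · exact le_of_eq ((hl u v h).1 hr)
  · exact le_of_lt ((hl u v h).2 hr)

lemma rtg_label_le {u v : V} (h : Relation.ReflTransGen N.Arc u v) : l u ≤ l v := by
  induction h with
  | refl => exact le_refl _
  | tail _ hb ih => exact le_trans ih (arc_label_le hl hb)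

lemma retic_label_eq {u v : V} (h : N.Arc u v) (hle : l v ≤ l u) :
    IsRetic N v ∧ l u = l v := by
  by_cases hr : IsRetic N v
  · exact ⟨hr, (hl u v h).1 hr⟩
  · exact absurd ((hl u v h).2 hr) (not_lt.mpr hle)


end Temporal

lemma treeBased_to_ATL (N : PhyloNet V) (h : TreeBased N) : AntichainToLeaf N := by
  obtain ⟨T, ⟨hTA, hT0, hT1⟩, hTX⟩ := h
  have hdesc : ∀ v : V, ∃ p : List V, p.head? = some v ∧ p.Chain' T ∧
      (∃ x ∈ N.X, p.getLast? = some x) ∧ ∀ w ∈ p, Relation.ReflTransGen T v w := by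
    intro v
    induction v using (wf_down N.acyclic).induction with
    | _ v ih =>
      by_cases hv : v ∈ N.X
      · refine ⟨[v], rfl, List.isChain_singleton _, ⟨v, hv, by simp⟩, ?_⟩
        intro w hw
        simp only [List.mem_singleton] at hw
        subst hw; exact Relation.ReflTransGen.refl
      · have hout : outDeg T v ≠ 0 := fun h => hv (hTX v h)
        have hpos : ({u : V | T v u}).ncard ≠ 0 := hout
        obtain ⟨u, hu⟩ := Set.nonempty_of_ncard_ne_zero hpos
        obtain ⟨p, hph, hpc, hpl, hpm⟩ := ih u (hTA _ _ hu)
        cases p with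
        | nil => simp at hph
        | cons a tl =>
          have ha : a = u := by simpa using hph
          subst ha
          refine ⟨v :: a :: tl, rfl, ?_, ?_, ?_⟩
          · exact List.isChain_cons_cons.mpr ⟨hu, hpc⟩
          · obtain ⟨x, hx1, hx2⟩ := hpl
            exact ⟨x, hx1, by rwa [List.getLast?_cons_cons]⟩
          · intro w hw
            rcases List.mem_cons.mp hw with rfl | hw2
            · exact Relation.ReflTransGen.refl
            · exact Relation.ReflTransGen.head hu (hpm w hw2)
  have huniq : ∀ w p q : V, T p w → T q w → p = q := by
    intro w p q hp hq
    have hwr : w ≠ N.root := by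
      intro he; subst he
      have h0 : inDeg T N.root = 0 := (hT0 N.root).mpr rfl
      have he2 : {u | T u N.root} = ∅ := (Set.ncard_eq_zero (Set.toFinite _)).mp h0
      exact absurd (he2 ▸ hp : p ∈ (∅ : Set V)) (by simp)
    obtain ⟨c, hc⟩ := Set.ncard_eq_one.mp (hT1 w hwr)
    have e1 : p ∈ {u | T u w} := hp
    have e2 : q ∈ {u | T u w} := hq
    rw [hc] at e1 e2
    exact e1.trans e2.symm
  have hcomp : ∀ w a b : V, Relation.ReflTransGen T a w → Relation.ReflTransGen T b w →
      Relation.ReflTransGen T a b ∨ Relation.ReflTransGen T b a := by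
    intro w
    induction w using (wf_fwd N.acyclic).induction with
    | _ w ih =>
      intro a b ha hb
      rcases ha.cases_tail with heq | ⟨p, hap, hpw⟩
      · exact Or.inr (heq ▸ hb)
      · rcases hb.cases_tail with heq | ⟨q, hbq, hqw⟩
        · exact Or.inl (heq ▸ ha)
        · have hpq : p = q := huniq w p q hpw hqw
          subst hpq
          exact ih p (Relation.TransGen.single (hTA _ _ hpw)) a b hap hbq
  intro S hS
  choose f hf1 hf2 hf3 hf4 using hdesc
  refine ⟨f, ?_, ?_⟩
  · intro s hsS
    refine ⟨⟨?_, ?_, ?_⟩, hf1 s, hf3 s⟩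
    · intro he
      have h5 := hf1 s
      rw [he] at h5
      simp at h5
    · exact List.IsChain.imp (fun a b h => hTA a b h) (hf2 s)
    · exact chain'_nodup N.acyclic (List.IsChain.imp (fun a b h => hTA a b h) (hf2 s))
  · intro s hs t ht hne v hvs hvt
    have h1 := hf4 s v hvs
    have h2 := hf4 t v hvt
    rcases hcomp v s t h1 h2 with hst | hts
    · have : Relation.ReflTransGen N.Arc s t :=
        Relation.ReflTransGen.mono (fun a b h => hTA a b h) _ _ hst
      exact hS s hs t ht hne (rtg_ne_transGen' this hne)
    · have : Relation.ReflTransGen N.Arc t s :=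
        Relation.ReflTransGen.mono (fun a b h => hTA a b h) _ _ hts
      exact hS t ht s hs (Ne.symm hne) (rtg_ne_transGen' this (Ne.symm hne))

lemma tree_of_choice (N : PhyloNet V) (f : {v : V // v ∉ N.X} → V)
    (hfinj : Function.Injective f) (hfarc : ∀ v, N.Arc v.1 (f v)) : TreeBased N := by
  classical
  let π : V → V := fun w =>
    if h : ∃ v : {v : V // v ∉ N.X}, f v = w then h.choose.1
    else if h2 : ∃ u, N.Arc u w then h2.choose else w
  let T : V → V → Prop := fun u w => w ≠ N.root ∧ π w = u
  have hTarc : ∀ u w, T u w → N.Arc u w := by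
    rintro u w ⟨hw, hpw⟩
    subst hpw
    by_cases h : ∃ v : {v : V // v ∉ N.X}, f v = w
    · simp only [π, dif_pos h]
      have hs := h.choose_spec
      have := hfarc h.choose
      rwa [hs] at this
    · simp only [π, dif_neg h]
      have h2 : ∃ u, N.Arc u w := exists_parent hw
      rw [dif_pos h2]
      exact h2.choose_spec
  refine ⟨T, ⟨hTarc, ?_, ?_⟩, ?_⟩
  · intro v
    constructor
    · intro h0
      by_contra hv
      have hmem : π v ∈ {u | T u v} := ⟨hv, rfl⟩
      have hemp := (Set.ncard_eq_zero (Set.toFinite _)).mp h0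
      rw [hemp] at hmem
      exact hmem
    · rintro rfl
      have hemp : {u | T u N.root} = ∅ := by
        ext u; simp [T]
      simp [inDeg, hemp]
  · intro v hv
    have hset : {u | T u v} = {π v} := by
      ext u
      simp only [T, Set.mem_setOf_eq, Set.mem_singleton_iff, hv, ne_eq, not_false_iff,
        true_and]
      exact eq_comm
    rw [inDeg, hset, Set.ncard_singleton]
  · intro v h0
    by_contra hv
    have hw1 : N.Arc v (f ⟨v, hv⟩) := hfarc ⟨v, hv⟩
    have hwroot : f ⟨v, hv⟩ ≠ N.root := child_ne_root hw1
    have hex : ∃ v' : {v : V // v ∉ N.X}, f v' = f ⟨v, hv⟩ := ⟨⟨v, hv⟩, rfl⟩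
    have hπ : π (f ⟨v, hv⟩) = v := by
      simp only [π, dif_pos hex]
      have hs : hex.choose = ⟨v, hv⟩ := hfinj hex.choose_spec
      rw [hs]
  
    have hmem : f ⟨v, hv⟩ ∈ {u | T v u} := ⟨hwroot, hπ⟩
    have hemp := (Set.ncard_eq_zero (Set.toFinite _)).mp h0
    rw [hemp] at hmem
    exact hmem

lemma ATL_to_treeBased (N : PhyloNet V) (hTemp : Temporal N) (hA : AntichainToLeaf N) :
    TreeBased N := by
  classical
  obtain ⟨lab, hlab⟩ := hTemp
  by_contra hnTB
  let childF : V → Finset V := fun v => (Set.toFinite {u | N.Arc v u}).toFinset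
  have hchildF : ∀ v u : V, u ∈ childF v ↔ N.Arc v u := fun v u => Set.Finite.mem_toFinset _
  have hmemC : ∀ (S : Finset V) (c : V), c ∈ S.biUnion childF ↔ ∃ s ∈ S, N.Arc s c := by
    intro S c
    simp [Finset.mem_biUnion, hchildF]
  -- Hall fails
  have hHallFail : ∃ S : Finset V, (∀ v ∈ S, v ∉ N.X) ∧ (S.biUnion childF).card < S.card := by
    by_contra hHall
    push_neg at hHall
    have hall2 : ∀ s : Finset {v : V // v ∉ N.X},
        s.card ≤ (s.biUnion (fun v => childF v.1)).card := by
      intro s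
      have himg : (s.image Subtype.val).biUnion childF = s.biUnion (fun v => childF v.1) := by
        ext u
        simp [Finset.mem_biUnion]
      have hcard : (s.image Subtype.val).card = s.card :=
        Finset.card_image_of_injective _ Subtype.val_injective
      have h3 := hHall (s.image Subtype.val) (by
        intro v hv
        obtain ⟨w, _, rfl⟩ := Finset.mem_image.mp hv
        exact w.2)
      rw [himg, hcard] at h3
      omega
    obtain ⟨f, hfinj, hfmem⟩ := (Finset.all_card_le_biUnion_card_iff_exists_injective
      (fun v : {v : V // v ∉ N.X} => childF v.1)).mp hall2
    exact hnTB (tree_of_choice N f hfinj (fun v => (hchildF _ _).mp (hfmem v)))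
  obtain ⟨S0, hS0⟩ := hHallFail
  let Defic : Finset V → Prop := fun S => (∀ v ∈ S, v ∉ N.X) ∧ (S.biUnion childF).card < S.card
  have hne : {n : ℕ | ∃ S, Defic S ∧ S.card = n}.Nonempty := ⟨S0.card, S0, hS0, rfl⟩
  obtain ⟨S, hSd, hScard⟩ := Nat.sInf_mem hne
  have hmin : ∀ S' : Finset V, Defic S' → S.card ≤ S'.card := by
    intro S' h
    rw [hScard]
    exact Nat.sInf_le ⟨S', h, rfl⟩
  obtain ⟨hSX, hSdef⟩ := hSd
  set C := S.biUnion childF with hCdef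
  -- every child of an element of S is shared
  have hshare : ∀ s ∈ S, ∀ c, N.Arc s c → ∃ s' ∈ S, s' ≠ s ∧ N.Arc s' c := by
    intro s hs c hc
    have hsub : (S.erase s).biUnion childF ⊆ C :=
      Finset.biUnion_subset_biUnion_of_subset_left _ (Finset.erase_subset _ _)
    have h1 : (S.erase s).card ≤ ((S.erase s).biUnion childF).card := by
      by_contra hcon
      have hd : Defic (S.erase s) :=
        ⟨fun v hv => hSX v (Finset.mem_of_mem_erase hv), by omega⟩
      have := hmin _ hd
      have := Finset.card_erase_of_mem hs
      have : 1 ≤ S.card := Finset.card_pos.mpr ⟨s, hs⟩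
      omega
    have hce := Finset.card_erase_of_mem hs
    have hsub_card := Finset.card_le_card hsub
    have heq : (S.erase s).biUnion childF = C :=
      Finset.eq_of_subset_of_card_le hsub (by omega)
    have hcC : c ∈ C := (hmemC S c).mpr ⟨s, hs, hc⟩
    rw [← heq] at hcC
    obtain ⟨s', hs', hsc'⟩ := (hmemC _ c).mp hcC
    exact ⟨s', Finset.mem_of_mem_erase hs', (Finset.mem_erase.mp hs').1, hsc'⟩
  have hCretic : ∀ c ∈ C, IsRetic N c := by
    intro c hc
    obtain ⟨s, hs, hsc⟩ := (hmemC S c).mp hc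
    obtain ⟨s', _, hne', hsc'⟩ := hshare s hs c hsc
    exact retic_of_two_parents hsc' hsc hne'
  have hlabelarc : ∀ s ∈ S, ∀ c, N.Arc s c → lab s = lab c := by
    intro s hs c hc
    exact (hlab s c hc).1 (hCretic c ((hmemC S c).mpr ⟨s, hs, hc⟩))
  have hSne : S.Nonempty := Finset.card_pos.mp (by omega)
  obtain ⟨s0, hs0⟩ := hSne
  -- connectivity via shared children
  let R : V → V → Prop := fun x y => x ∈ S ∧ y ∈ S ∧ ∃ c, N.Arc x c ∧ N.Arc y c
  have hconn : ∀ s ∈ S, Relation.ReflTransGen R s0 s := by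
    by_contra hcon
    push_neg at hcon
    obtain ⟨s1, hs1S, hs1⟩ := hcon
    set S1 : Finset V := S.filter (fun s => Relation.ReflTransGen R s0 s) with hS1def
    set S2 : Finset V := S.filter (fun s => ¬ Relation.ReflTransGen R s0 s) with hS2def
    have hS1sub : S1 ⊆ S := Finset.filter_subset _ _
    have hS2sub : S2 ⊆ S := Finset.filter_subset _ _
    have hdisj : Disjoint (S1.biUnion childF) (S2.biUnion childF) := by
      rw [Finset.disjoint_left]
      intro c hc1 hc2
      obtain ⟨a, ha, hac⟩ := (hmemC S1 c).mp hc1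
      obtain ⟨b, hb, hbc⟩ := (hmemC S2 c).mp hc2
      have haS := Finset.mem_filter.mp ha
      have hbS := Finset.mem_filter.mp hb
      exact hbS.2 (haS.2.tail ⟨haS.1, hbS.1, c, hac, hbc⟩)
    have hsplit : S1.biUnion childF ∪ S2.biUnion childF = C := by
      ext c
      rw [Finset.mem_union, hmemC, hmemC, hCdef, hmemC]
      constructor
      · rintro (⟨a, haS, hc⟩ | ⟨a, haS, hc⟩)
        · exact ⟨a, hS1sub haS, hc⟩
        · exact ⟨a, hS2sub haS, hc⟩
      · rintro ⟨a, haS, hc⟩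
        by_cases hr : Relation.ReflTransGen R s0 a
        · exact Or.inl ⟨a, Finset.mem_filter.mpr ⟨haS, hr⟩, hc⟩
        · exact Or.inr ⟨a, Finset.mem_filter.mpr ⟨haS, hr⟩, hc⟩
    have hcardC : C.card = (S1.biUnion childF).card + (S2.biUnion childF).card := by
      rw [← hsplit, Finset.card_union_of_disjoint hdisj]
    have hdisj12 : Disjoint S1 S2 := Finset.disjoint_filter_filter_not S S _
    have hunion : S1 ∪ S2 = S := Finset.filter_union_filter_not_eq _ S
    have hcardS : S.card = S1.card + S2.card := by
      rw [← hunion, Finset.card_union_of_disjoint hdisj12]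
    have hs0S1 : s0 ∈ S1 := Finset.mem_filter.mpr ⟨hs0, Relation.ReflTransGen.refl⟩
    have hs1S2 : s1 ∈ S2 := Finset.mem_filter.mpr ⟨hs1S, hs1⟩
    have hS1lt : S1.card < S.card := Finset.card_lt_card
      ⟨hS1sub, fun hsup => hs1 (Finset.mem_filter.mp (hsup hs1S)).2⟩
    have hS2lt : S2.card < S.card := Finset.card_lt_card
      ⟨hS2sub, fun hsup =>
        (Finset.mem_filter.mp (hsup hs0)).2 Relation.ReflTransGen.refl⟩
    have hd1 : ¬ ((S1.biUnion childF).card < S1.card) := by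
      intro h
      have := hmin S1 ⟨fun v hv => hSX v (hS1sub hv), h⟩
      omega
    have hd2 : ¬ ((S2.biUnion childF).card < S2.card) := by
      intro h
      have := hmin S2 ⟨fun v hv => hSX v (hS2sub hv), h⟩
      omega
    omega
  have hlabS : ∀ s ∈ S, lab s = lab s0 := by
    intro s hs
    have h := hconn s hs
    induction h with
    | refl => rfl
    | tail hprev hstep ih =>
      obtain ⟨hbS, hcS, c', h1, h2⟩ := hstep
      have e1 := hlabelarc _ hbS _ h1
      have e2 := hlabelarc _ hcS _ h2
      rw [e2, ← e1, ih hbS]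
  -- the level and tail function
  let P : V → Prop := fun x => IsRetic N x ∧ lab x = lab s0
  have hdet : ∀ x, P x → ∀ a b, N.Arc x a → N.Arc x b → a = b :=
    fun x hx a b ha hb => retic_det hx.1 ha hb
  have hCP : ∀ c ∈ C, P c := by
    intro c hc
    obtain ⟨s, hs, hsc⟩ := (hmemC S c).mp hc
    exact ⟨hCretic c hc, by rw [← hlabelarc s hs c hsc, hlabS s hs]⟩
  have hterm := exists_term (A := N.Arc) (P := P) N.acyclic
  choose t ht using hterm
  have htorb : ∀ x, P x → Relation.ReflTransGen (StepR N.Arc P) x (t x) ∧ P (t x) ∧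
      ∀ z, N.Arc (t x) z → ¬ P z := fun x hx => ht x hx
  -- minimal elements of S
  let B : Finset V := S.filter (fun b => ∀ d ∈ S, Relation.TransGen N.Arc d b → d = b)
  let D : Finset V := S \ B
  have hBD : B ⊆ S := Finset.filter_subset _ _
  have hDcard : S.card = B.card + D.card := by
    have h1 : D.card = S.card - B.card := Finset.card_sdiff_of_subset hBD
    have h2 : B.card ≤ S.card := Finset.card_le_card hBD
    omega
  have hDfact : ∀ d ∈ D, P d ∧ (∃ z, N.Arc d z ∧ z ∈ C) ∧
      (∃ r ∈ C, Relation.ReflTransGen (StepR N.Arc P) r d) := by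
    intro d hd
    obtain ⟨hdS, hdB⟩ := Finset.mem_sdiff.mp hd
    have hex : ∃ s ∈ S, s ≠ d ∧ Relation.TransGen N.Arc s d := by
      by_contra hcon
      push_neg at hcon
      refine hdB (Finset.mem_filter.mpr ⟨hdS, fun s hsS htg => ?_⟩)
      by_contra hne
      exact hcon s hsS hne htg
    obtain ⟨s, hsS, hsne, hstg⟩ := hex
    obtain ⟨v1, hv1, hv1d⟩ := Relation.TransGen.head'_iff.mp hstg
    have hlabd : lab d = lab s0 := hlabS d hdS
    have hlabs : lab s = lab s0 := hlabS s hsS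
    have hv1C : v1 ∈ C := (hmemC S v1).mpr ⟨s, hsS, hv1⟩
    have hPv1 : P v1 := by
      have h2 : lab v1 ≤ lab d := rtg_label_le hlab hv1d
      have hle : lab v1 ≤ lab s := by
        rw [hlabs, ← hlabd]
        exact h2
      obtain ⟨hr, heq⟩ := retic_label_eq hlab hv1 hle
      exact ⟨hr, by rw [← heq, hlabs]⟩
    have key : ∀ x, Relation.ReflTransGen N.Arc x d → P x →
        Relation.ReflTransGen (StepR N.Arc P) x d ∧ P d := by
      intro x hxd
      induction hxd using Relation.ReflTransGen.head_induction_on with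
      | refl => exact fun hx => ⟨Relation.ReflTransGen.refl, hx⟩
      | head hac hcd ih =>
        rename_i a c
        intro hx
        have h1 : lab c ≤ lab d := rtg_label_le hlab hcd
        have hle : lab c ≤ lab a := by
          rw [hx.2, ← hlabd]
          exact h1
        obtain ⟨hr, heq⟩ := retic_label_eq hlab hac hle
        have hPc : P c := ⟨hr, by rw [← heq, hx.2]⟩
        obtain ⟨ho, hpd⟩ := ih hPc
        exact ⟨Relation.ReflTransGen.head ⟨hx, hac⟩ ho, hpd⟩
    obtain ⟨horb, hPd⟩ := key v1 hv1d hPv1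
    have hchildd : ∃ z, N.Arc d z ∧ z ∈ C := by
      obtain ⟨z, hz⟩ := exists_child (retic_not_leaf hPd.1)
      exact ⟨z, hz, (hmemC S z).mpr ⟨d, hdS, hz⟩⟩
    exact ⟨hPd, hchildd, v1, hv1C, horb⟩
  have hcount := counting N.acyclic hdet t htorb D.card C D rfl hCP
    (fun d hd => (hDfact d hd).1) (fun d hd => (hDfact d hd).2.1)
    (fun d hd => (hDfact d hd).2.2)
  have hBac : AntichainIn N B := by
    intro u hu v hv hne htg
    have hvB := Finset.mem_filter.mp hv
    exact hne (hvB.2 u (hBD hu) htg)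
  obtain ⟨f, hf1, hf2⟩ := hA B hBac
  have hsecond : ∀ b : V, ∃ w, b ∈ B → N.Arc b w ∧ w ∈ C ∧ t w ∈ f b := by
    intro b
    by_cases hb : b ∈ B
    · have hbS := hBD hb
      have hbX : b ∉ N.X := hSX b hbS
      obtain ⟨⟨hne0, hchain, hnodup⟩, hhead, hends⟩ := hf1 b hb
      obtain ⟨x, hxX, hxlast⟩ := hends
      obtain ⟨hd, tl, hfb⟩ := List.exists_cons_of_ne_nil hne0
      have hhd : hd = b := by
        rw [hfb] at hhead
        simpa using hhead
      subst hhd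
      cases tl with
      | nil =>
        rw [hfb] at hxlast
        simp at hxlast
        exact absurd (hxlast ▸ hxX) hbX
      | cons v1 tl2 =>
        have harc : N.Arc hd v1 := by
          rw [hfb] at hchain
          exact (List.isChain_cons_cons.mp hchain).1
        have hv1C : v1 ∈ C := (hmemC S v1).mpr ⟨hd, hbS, harc⟩
        have hPv1 : P v1 := hCP v1 hv1C
        have hmem : v1 ∈ f hd := by
          rw [hfb]
          simp
        have hlastne : ∀ y, P y → (f hd).getLast? ≠ some y := by
          intro y hy heq
          rw [hxlast] at heq
          have hxy : x = y := by injection heq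
          exact retic_not_leaf hy.1 (hxy ▸ hxX)
        exact ⟨v1, fun _ => ⟨harc, hv1C,
          t_in_path N.acyclic hdet t htorb v1 hPv1 (f hd) hchain hmem hlastne⟩⟩
    · exact ⟨b, fun h => absurd h hb⟩
  choose w hw using hsecond
  have hinj : B.card ≤ (C.image t).card := by
    apply Finset.card_le_card_of_injOn (fun b => t (w b))
    · intro b hb
      exact Finset.mem_image_of_mem t (hw b hb).2.1
    · intro b1 hb1 b2 hb2 heq
      by_contra hne2
      have heq' : t (w b1) = t (w b2) := heq
      have h1 := (hw b1 hb1).2.2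
      have h2 := (hw b2 hb2).2.2
      rw [heq'] at h1
      exact hf2 b1 hb1 b2 hb2 hne2 _ h1 h2
  omega

end PhyloHelpers

/-- a temporal network is tree-based iff it satisfies the
antichain-to-leaf property. -/
theorem stmt7 {V : Type*} [Fintype V] [DecidableEq V] (N : PhyloNet V)
    (h : Temporal N) : TreeBased N ↔ AntichainToLeaf N :=
  ⟨treeBased_to_ATL N, ATL_to_treeBased N h⟩
end

section
/- Let N be a binary rooted phylogenetic network, T_N the set of tree vertices having at least one reticulation child, R the set of reticulations, and Z_N the bipartite graph on (T_N, R) with an edge {t,r} whenever (t,r) is an arc of N. Then N is tree-based if and only if Z_N has a matching of size |R|. -/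
open Relation

set_option linter.unusedSectionVars false
set_option linter.unusedVariables false
namespace S14
open Finset
open scoped Classical

variable {V : Type*} [Fintype V] [DecidableEq V]

lemma ncard_setOf (p : V → Prop) : {v | p v}.ncard = (Finset.univ.filter p).card := by
  rw [Set.ncard_eq_toFinset_card']
  congr 1
  ext v
  simp

variable (N : PhyloNet V)

lemma arc_out_pos {u v : V} (h : N.Arc u v) : 1 ≤ outDeg N.Arc u :=
  (Set.ncard_pos).2 ⟨v, h⟩

lemma parent_not_leaf {u v : V} (h : N.Arc u v) : u ∉ N.X := by
  intro hx
  have h0 := (N.leaf_iff u).1 hx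
  have h1 := arc_out_pos N h
  omega

lemma cycle_absurd {a b : V} (h1 : Relation.ReflTransGen N.Arc a b) (h2 : N.Arc b a) : False :=
  N.acyclic a (Relation.TransGen.tail' h1 h2)

lemma root_inDeg : inDeg N.Arc N.root = 0 := by
  rw [inDeg, Set.ncard_eq_zero]
  ext u
  simp only [Set.mem_setOf_eq, Set.mem_empty_iff_false, iff_false]
  intro h
  exact cycle_absurd N (N.reach u) h

lemma root_not_retic : ¬ IsRetic N N.root := by
  rw [IsRetic, root_inDeg]; omega

lemma retic_ne_root {v : V} (h : IsRetic N v) : v ≠ N.root := by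
  rintro rfl; exact root_not_retic N h

lemma retic_not_leaf {v : V} (h : IsRetic N v) : v ∉ N.X := by
  intro hx
  have := N.leaf_in v hx
  rw [IsRetic] at h
  omega

lemma root_not_leaf : N.root ∉ N.X := by
  intro hx
  have h1 := (N.leaf_iff _).1 hx
  have := N.root_out
  omega

lemma root_treeVert : IsTreeVert N N.root :=
  ⟨root_not_leaf N, by rw [root_inDeg]; omega⟩

lemma inDeg_pos {v : V} (hv : v ≠ N.root) : 1 ≤ inDeg N.Arc v := by
  by_cases hx : v ∈ N.X
  · rw [N.leaf_in v hx]
  · rcases N.internal v hv hx with ⟨h, _⟩ | ⟨h, _⟩ <;> omega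

lemma retic_outDeg {v : V} (h : IsRetic N v) : outDeg N.Arc v = 1 := by
  rcases N.internal v (retic_ne_root N h) (retic_not_leaf N h) with ⟨h1, _⟩ | ⟨_, h2⟩
  · rw [IsRetic] at h; omega
  · exact h2

lemma retic_inDeg (hb : IsBinary N) {v : V} (h : IsRetic N v) : inDeg N.Arc v = 2 := by
  have := (hb v).1
  rw [IsRetic] at h
  omega

lemma treeVert_outDeg (hb : IsBinary N) {v : V} (h : IsTreeVert N v) (hv : v ≠ N.root) :
    outDeg N.Arc v = 2 := by
  rcases N.internal v hv h.1 with ⟨_, h2⟩ | ⟨h1, _⟩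
  · have := (hb v).2; omega
  · have := h.2; omega

lemma nonretic_inDeg {v : V} (h : ¬ IsRetic N v) (hv : v ≠ N.root) : inDeg N.Arc v = 1 := by
  have h1 := inDeg_pos N hv
  rw [IsRetic] at h
  omega

lemma treeVert_or_retic {u v : V} (h : N.Arc u v) : IsTreeVert N u ∨ IsRetic N u := by
  by_cases hr : IsRetic N u
  · exact Or.inr hr
  · exact Or.inl ⟨parent_not_leaf N h, by rw [IsRetic] at hr; omega⟩

lemma treeVert_not_retic {v : V} (h : IsTreeVert N v) : ¬ IsRetic N v := by
  have := h.2; rw [IsRetic]; omega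

lemma retic_not_treeVert {v : V} (h : IsRetic N v) : ¬ IsTreeVert N v := by
  intro ht; exact treeVert_not_retic N ht h

lemma retic_two_parents (hb : IsBinary N) {v : V} (h : IsRetic N v) :
    ∃ a b, a ≠ b ∧ N.Arc a v ∧ N.Arc b v ∧ ∀ u, N.Arc u v → u = a ∨ u = b := by
  have h2 : {u | N.Arc u v}.ncard = 2 := retic_inDeg N hb h
  rcases Set.ncard_eq_two.1 h2 with ⟨a, b, hab, hs⟩
  refine ⟨a, b, hab, ?_, ?_, ?_⟩
  · show a ∈ {u | N.Arc u v}
    rw [hs]; simp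
  · show b ∈ {u | N.Arc u v}
    rw [hs]; simp
  · intro u hu
    have : u ∈ {u | N.Arc u v} := hu
    rw [hs] at this
    simpa using this

lemma out_one_unique {v : V} (h : outDeg N.Arc v = 1) :
    ∃ c, N.Arc v c ∧ ∀ u, N.Arc v u → u = c := by
  rcases Set.ncard_eq_one.1 h with ⟨c, hc⟩
  refine ⟨c, ?_, ?_⟩
  · show c ∈ {u | N.Arc v u}
    rw [hc]; simp
  · intro u hu
    have : u ∈ {u | N.Arc v u} := hu
    rw [hc] at this
    simpa using this

lemma out_two_members (hb : IsBinary N) {v : V} (h : outDeg N.Arc v = 2) :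
    ∃ a b, a ≠ b ∧ N.Arc v a ∧ N.Arc v b ∧ ∀ u, N.Arc v u → u = a ∨ u = b := by
  rcases Set.ncard_eq_two.1 h with ⟨a, b, hab, hs⟩
  refine ⟨a, b, hab, ?_, ?_, ?_⟩
  · show a ∈ {u | N.Arc v u}; rw [hs]; simp
  · show b ∈ {u | N.Arc v u}; rw [hs]; simp
  · intro u hu
    have : u ∈ {u | N.Arc v u} := hu
    rw [hs] at this
    simpa using this

lemma omnian_tree_out_two (hb : IsBinary N) {v : V} (ho : IsOmnian N v) (ht : IsTreeVert N v) :
    outDeg N.Arc v = 2 := by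
  by_cases hv : v = N.root
  · subst hv
    have h2 := (hb N.root).2
    have h1 := N.root_out
    rcases Nat.lt_or_ge (outDeg N.Arc N.root) 2 with hlt | hge
    · exfalso
      have hone : outDeg N.Arc N.root = 1 := by omega
      rcases out_one_unique N hone with ⟨c, hc, huniq⟩
      have hcr : IsRetic N c := ho.2 c hc
      rcases retic_two_parents N hb hcr with ⟨a, b, hab, ha, hb', hcov⟩
      -- one of a,b is not root
      have : ∃ u, N.Arc u c ∧ u ≠ N.root := by
        by_cases haroot : a = N.root
        · exact ⟨b, hb', by rintro rfl; exact hab (by rw [haroot])⟩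
        · exact ⟨a, ha, haroot⟩
      rcases this with ⟨u, huc, hur⟩
      rcases (N.reach u).cases_head with he | ⟨x, hx, hxu⟩
      · exact hur he.symm
      · have hxc : x = c := huniq x hx
        subst hxc
        exact cycle_absurd N hxu huc
    · omega
  · exact treeVert_outDeg N hb ht hv

end S14

-- appended to aux1 context
namespace S14
open Finset
open scoped Classical
variable {V : Type*} [Fintype V] [DecidableEq V] (N : PhyloNet V)

def GoodP (p : V → V) : Prop :=
  (∀ r, IsRetic N r → N.Arc (p r) r) ∧
  (∀ v, v ∉ N.X → ∃ c, N.Arc v c ∧ (¬ IsRetic N c ∨ p c = v))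

lemma treeBased_iff_good : TreeBased N ↔ ∃ p, GoodP N p := by
  constructor
  · rintro ⟨T, ⟨⟨hsub, hiff, hone⟩, hleaf⟩⟩
    have huniq : ∀ v, v ≠ N.root → ∃ c, T c v ∧ ∀ u, T u v → u = c := by
      intro v hv
      rcases Set.ncard_eq_one.1 (hone v hv) with ⟨c, hc⟩
      refine ⟨c, ?_, ?_⟩
      · show c ∈ {u | T u v}; rw [hc]; simp
      · intro u hu
        have : u ∈ {u | T u v} := hu
        rw [hc] at this; simpa using this
    refine ⟨fun r => if h : ∃ u, T u r then h.choose else r, ?_, ?_⟩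
    · intro r hr
      have hrr : r ≠ N.root := retic_ne_root N hr
      rcases huniq r hrr with ⟨c, hc, hu⟩
      have h : ∃ u, T u r := ⟨c, hc⟩
      show N.Arc (if h : ∃ u, T u r then h.choose else r) r
      rw [dif_pos h]
      exact hsub _ _ h.choose_spec
    · intro v hv
      have hout : outDeg T v ≠ 0 := fun h0 => hv (hleaf v h0)
      rcases (Set.ncard_pos (Set.toFinite _)).1 (Nat.pos_of_ne_zero hout) with ⟨c, hc⟩
      refine ⟨c, hsub _ _ hc, Or.inr ?_⟩
      have hcr : c ≠ N.root := by
        intro hcr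
        have h0 : inDeg T c = 0 := (hiff c).2 hcr
        rw [inDeg, Set.ncard_eq_zero] at h0
        have : v ∈ {u | T u c} := hc
        rw [h0] at this
        exact this
      rcases huniq c hcr with ⟨c', hc', hu⟩
      have h : ∃ u, T u c := ⟨v, hc⟩
      show (if h : ∃ u, T u c then h.choose else c) = v
      rw [dif_pos h]
      have h1 := hu _ h.choose_spec
      have h2 := hu _ hc
      rw [h1, h2]
  · rintro ⟨p, hp1, hp2⟩
    refine ⟨fun u v => N.Arc u v ∧ (IsRetic N v → p v = u), ⟨⟨fun u v h => h.1, ?_, ?_⟩, ?_⟩⟩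
    · intro v
      constructor
      · intro h0
        by_contra hv
        have h1 : 1 ≤ inDeg (fun u v => N.Arc u v ∧ (IsRetic N v → p v = u)) v := by
          by_cases hr : IsRetic N v
          · exact (Set.ncard_pos (Set.toFinite _)).2 ⟨p v, hp1 v hr, fun _ => rfl⟩
          · have := inDeg_pos N hv
            rcases (Set.ncard_pos (Set.toFinite _)).1
              (by omega : 0 < inDeg N.Arc v) with ⟨u, hu⟩
            exact (Set.ncard_pos (Set.toFinite _)).2 ⟨u, hu, fun hr' => absurd hr' hr⟩
        omega
      · rintro rfl
        rw [inDeg, Set.ncard_eq_zero]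
        ext u
        simp only [Set.mem_setOf_eq, Set.mem_empty_iff_false, iff_false]
        rintro ⟨h, -⟩
        exact cycle_absurd N (N.reach u) h
    · intro v hv
      by_cases hr : IsRetic N v
      · have : {u | N.Arc u v ∧ (IsRetic N v → p v = u)} = {p v} := by
          ext u
          simp only [Set.mem_setOf_eq, Set.mem_singleton_iff]
          constructor
          · rintro ⟨_, h2⟩; exact (h2 hr).symm
          · rintro rfl; exact ⟨hp1 v hr, fun _ => rfl⟩
        rw [inDeg, this, Set.ncard_singleton]
      · have : {u | N.Arc u v ∧ (IsRetic N v → p v = u)} = {u | N.Arc u v} := by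
          ext u
          simp only [Set.mem_setOf_eq, and_iff_left_iff_imp]
          exact fun _ hr' => absurd hr' hr
        rw [inDeg, this]
        exact nonretic_inDeg N hr hv
    · intro v h0
      by_contra hv
      rcases hp2 v hv with ⟨c, hc, hor⟩
      have : c ∈ {u | N.Arc v u ∧ (IsRetic N u → p u = v)} := by
        refine ⟨hc, fun hr => ?_⟩
        rcases hor with h | h
        · exact absurd hr h
        · exact h
      have : 0 < outDeg (fun u v => N.Arc u v ∧ (IsRetic N v → p v = u)) v :=
        (Set.ncard_pos (Set.toFinite _)).2 ⟨c, this⟩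
      omega

end S14

namespace S14
open Finset
open scoped Classical
variable {V : Type*} [Fintype V] [DecidableEq V] (N : PhyloNet V)

lemma sum_card_eq (S T : Finset V) (nb : V → Finset V) (hsub : ∀ v ∈ S, nb v ⊆ T) :
    ∑ v ∈ S, (nb v).card = ∑ u ∈ T, (S.filter (fun v => u ∈ nb v)).card := by
  have h1 : ∀ v ∈ S, (nb v).card = ∑ u ∈ T, ite (u ∈ nb v) 1 0 := by
    intro v hv
    rw [← Finset.card_filter]
    congr 1
    ext u
    simp only [Finset.mem_filter]
    exact ⟨fun h => ⟨hsub v hv h, h⟩, fun h => h.2⟩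
  rw [Finset.sum_congr rfl h1, Finset.sum_comm]
  exact Finset.sum_congr rfl fun u hu => (Finset.card_filter _ _).symm

noncomputable def treeParF (r : V) : Finset V :=
  Finset.univ.filter (fun u => N.Arc u r ∧ IsTreeVert N u)
noncomputable def chF (v : V) : Finset V := Finset.univ.filter (fun u => N.Arc v u)

lemma chF_card (v : V) : (chF N v).card = outDeg N.Arc v := (ncard_setOf _).symm
lemma mem_chF {v u : V} : u ∈ chF N v ↔ N.Arc v u := by simp [chF]
lemma mem_treeParF {r u : V} : u ∈ treeParF N r ↔ N.Arc u r ∧ IsTreeVert N u := by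
  simp [treeParF]

lemma retic_parent_forces (p : V → V) (hp : GoodP N p) {w r : V} (hw : N.Arc w r)
    (hrw : IsRetic N w) (hrr : IsRetic N r) : p r = w := by
  rcases out_one_unique N (retic_outDeg N hrw) with ⟨c0, hc0, huniq⟩
  rcases hp.2 w (parent_not_leaf N hw) with ⟨c', hc', hor⟩
  have e1 : c' = r := (huniq c' hc').trans (huniq r hw).symm
  subst e1
  rcases hor with h | h
  · exact absurd hrr h
  · exact h

lemma both_retic_absurd (p : V → V) (hp : GoodP N p) {a b r : V} (ha : N.Arc a r)
    (hb : N.Arc b r) (hab : a ≠ b) (hra : IsRetic N a) (hrb : IsRetic N b)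
    (hrr : IsRetic N r) : False := by
  have h1 := retic_parent_forces N p hp ha hra hrr
  have h2 := retic_parent_forces N p hp hb hrb hrr
  exact hab (h1 ▸ h2 ▸ rfl)

lemma kept_child_Rt (p : V → V) (hp : GoodP N p) {u c : V} (hc : IsRetic N c)
    (hpc : p c = u) (hu : IsTreeVert N u) : Rt N c := by
  refine ⟨hc, fun w hw hrw => ?_⟩
  have h := retic_parent_forces N p hp hw hrw hc
  rw [hpc] at h
  exact treeVert_not_retic N hu (h ▸ hrw)

lemma B1 (hb : IsBinary N) (p : V → V) (hp : GoodP N p) :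
    ∃ f : V → V, (∀ r, IsRetic N r → N.Arc (f r) r ∧ IsTreeVert N (f r)) ∧
      ∀ r1 r2, IsRetic N r1 → IsRetic N r2 → f r1 = f r2 → r1 = r2 := by
  classical
  have hall : ∀ A : Finset {r : V // IsRetic N r},
      A.card ≤ (A.biUnion (fun i => treeParF N i.1)).card := by
    intro A
    set Af : Finset V := A.image Subtype.val with hAfdef
    have hAfsub : ∀ r ∈ Af, IsRetic N r := by
      intro r hr
      rcases Finset.mem_image.1 hr with ⟨i, _, rfl⟩
      exact i.2
    have hAcard : Af.card = A.card := Finset.card_image_of_injective _ Subtype.val_injective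
    have hNt : A.biUnion (fun i => treeParF N i.1) = Af.biUnion (treeParF N) :=
      (Finset.image_biUnion).symm
    rw [hNt, ← hAcard]
    set Nt := Af.biUnion (treeParF N) with hNtdef
    have hsub : ∀ r ∈ Af, treeParF N r ⊆ Nt := fun r hr => Finset.subset_biUnion_of_mem _ hr
    have hkey := sum_card_eq Af Nt (treeParF N) hsub
    have hlow : Af.card + (Af.filter (Rt N)).card ≤ ∑ r ∈ Af, (treeParF N r).card := by
      have hbnd : ∀ r ∈ Af, 1 + ite (Rt N r) 1 0 ≤ (treeParF N r).card := by
        intro r hr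
        have hrr := hAfsub r hr
        rcases retic_two_parents N hb hrr with ⟨a, b, hab, ha, hb', hcov⟩
        by_cases hRt : Rt N r
        · have hta : IsTreeVert N a := by
            rcases treeVert_or_retic N ha with h | h
            · exact h
            · exact absurd h (hRt.2 a ha)
          have htb : IsTreeVert N b := by
            rcases treeVert_or_retic N hb' with h | h
            · exact h
            · exact absurd h (hRt.2 b hb')
          have hss : ({a, b} : Finset V) ⊆ treeParF N r := by
            intro u hu
            rcases Finset.mem_insert.1 hu with rfl | hu
            · exact (mem_treeParF N).2 ⟨ha, hta⟩
            · rw [Finset.mem_singleton.1 hu]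
              exact (mem_treeParF N).2 ⟨hb', htb⟩
          have := Finset.card_le_card hss
          rw [Finset.card_pair hab] at this
          simp only [if_pos hRt]
          omega
        · simp only [if_neg hRt]
          have : ∃ u, u ∈ treeParF N r := by
            rcases treeVert_or_retic N ha with h | h
            · exact ⟨a, (mem_treeParF N).2 ⟨ha, h⟩⟩
            · rcases treeVert_or_retic N hb' with h' | h'
              · exact ⟨b, (mem_treeParF N).2 ⟨hb', h'⟩⟩
              · exact absurd (both_retic_absurd N p hp ha hb' hab h h' hrr) (fun x => x)
          rcases this with ⟨u, hu⟩
          have := Finset.card_pos.2 ⟨u, hu⟩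
          omega
      calc Af.card + (Af.filter (Rt N)).card = ∑ r ∈ Af, (1 + ite (Rt N r) 1 0) := by
            rw [Finset.sum_add_distrib, Finset.sum_const, smul_eq_mul, mul_one,
              ← Finset.card_filter]
        _ ≤ _ := Finset.sum_le_sum hbnd
    have hNtTree : ∀ u ∈ Nt, IsTreeVert N u := by
      intro u hu
      rcases Finset.mem_biUnion.1 hu with ⟨r, _, hu'⟩
      exact ((mem_treeParF N).1 hu').2
    have hub : ∀ u ∈ Nt, (Af.filter (fun r => u ∈ treeParF N r)).card ≤
        1 + ite (2 ≤ (Af.filter (fun r => N.Arc u r)).card) 1 0 := by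
      intro u hu
      have heq : Af.filter (fun r => u ∈ treeParF N r) = Af.filter (fun r => N.Arc u r) := by
        apply Finset.filter_congr
        intro r hr
        simp [mem_treeParF, hNtTree u hu]
      rw [heq]
      have h2 : (Af.filter (fun r => N.Arc u r)).card ≤ 2 := by
        have hss : Af.filter (fun r => N.Arc u r) ⊆ chF N u := by
          intro r hr
          rw [mem_chF]
          exact (Finset.mem_filter.1 hr).2
        calc (Af.filter (fun r => N.Arc u r)).card ≤ (chF N u).card := Finset.card_le_card hss
          _ = outDeg N.Arc u := chF_card N u
          _ ≤ 2 := (hb u).2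
      split <;> omega
    have hN2 : (Nt.filter (fun u => 2 ≤ (Af.filter (fun r => N.Arc u r)).card)).card ≤
        (Af.filter (Rt N)).card := by
      have hψ : ∀ u ∈ Nt.filter (fun u => 2 ≤ (Af.filter (fun r => N.Arc u r)).card),
          ∃ c, (c ∈ Af ∧ Rt N c) ∧ p c = u := by
        intro u hu
        rcases Finset.mem_filter.1 hu with ⟨huNt, hcard⟩
        have htu := hNtTree u huNt
        rcases Finset.one_lt_card.1 (by omega : 1 < (Af.filter (fun r => N.Arc u r)).card)
          with ⟨c1, hc1, c2, hc2, hne⟩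
        rcases Finset.mem_filter.1 hc1 with ⟨hc1A, hc1arc⟩
        rcases Finset.mem_filter.1 hc2 with ⟨hc2A, hc2arc⟩
        have hpairsub : ({c1, c2} : Finset V) ⊆ chF N u := by
          intro x hx
          rcases Finset.mem_insert.1 hx with rfl | hx
          · exact (mem_chF N).2 hc1arc
          · rw [Finset.mem_singleton.1 hx]
            exact (mem_chF N).2 hc2arc
        have hchcard : (chF N u).card ≤ 2 := by rw [chF_card]; exact (hb u).2
        have hpair : ({c1, c2} : Finset V) = chF N u := by
          apply Finset.eq_of_subset_of_card_le hpairsub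
          rw [Finset.card_pair hne]
          exact hchcard
        rcases hp.2 u htu.1 with ⟨c, hcarc, hor⟩
        have hcmem : c ∈ ({c1, c2} : Finset V) := by rw [hpair, mem_chF]; exact hcarc
        have hcA : c ∈ Af := by
          rcases Finset.mem_insert.1 hcmem with rfl | h
          · exact hc1A
          · rw [Finset.mem_singleton.1 h]; exact hc2A
        have hcr : IsRetic N c := hAfsub c hcA
        have hpc : p c = u := by
          rcases hor with h | h
          · exact absurd hcr h
          · exact h
        exact ⟨c, ⟨hcA, kept_child_Rt N p hp hcr hpc htu⟩, hpc⟩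
      choose ψ hψ1 hψ2 using hψ
      apply Finset.card_le_card_of_injOn (fun u => if h : _ then ψ u h else u)
      · intro u hu
        simp only [dif_pos hu]
        simp only [Finset.mem_coe] at hu ⊢; rw [dif_pos hu, Finset.mem_filter]
        exact hψ1 u hu
      · intro u hu u' hu' heq
        simp only [Finset.mem_coe] at hu hu'
        simp only [dif_pos hu, dif_pos hu'] at heq
        rw [← hψ2 u hu, ← hψ2 u' hu', heq]
    have hup : ∑ u ∈ Nt, (Af.filter (fun r => u ∈ treeParF N r)).card ≤
        Nt.card + (Af.filter (Rt N)).card := by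
      calc ∑ u ∈ Nt, (Af.filter (fun r => u ∈ treeParF N r)).card
          ≤ ∑ u ∈ Nt, (1 + ite (2 ≤ (Af.filter (fun r => N.Arc u r)).card) 1 0) :=
            Finset.sum_le_sum hub
        _ = Nt.card + (Nt.filter (fun u => 2 ≤ (Af.filter (fun r => N.Arc u r)).card)).card := by
            rw [Finset.sum_add_distrib, Finset.sum_const, smul_eq_mul, mul_one,
              ← Finset.card_filter]
        _ ≤ Nt.card + (Af.filter (Rt N)).card := by omega
    omega
  rcases (Finset.all_card_le_biUnion_card_iff_exists_injective
    (fun i : {r : V // IsRetic N r} => treeParF N i.1)).1 hall with ⟨f0, hinj, hmem⟩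
  refine ⟨fun r => if h : IsRetic N r then f0 ⟨r, h⟩ else r, ?_, ?_⟩
  · intro r hr
    simp only [dif_pos hr]
    have hm := (mem_treeParF N).1 (hmem ⟨r, hr⟩)
    exact ⟨hm.1, hm.2⟩
  · intro r1 r2 h1 h2 heq
    simp only [dif_pos h1, dif_pos h2] at heq
    have := hinj heq
    exact congrArg Subtype.val this

end S14

namespace S14
open Finset
open scoped Classical
variable {V : Type*} [Fintype V] [DecidableEq V] (N : PhyloNet V)

noncomputable def chR1F (v : V) : Finset V :=
  Finset.univ.filter (fun r => N.Arc v r ∧ Rt N r)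

lemma mem_chR1F {v r : V} : r ∈ chR1F N v ↔ N.Arc v r ∧ Rt N r := by simp [chR1F]

def HasR0 (v : V) : Prop := ∃ c, N.Arc v c ∧ IsRetic N c ∧ ¬ Rt N c

lemma not_Rt_exists {c : V} (hc : IsRetic N c) (h : ¬ Rt N c) :
    ∃ w, N.Arc w c ∧ IsRetic N w := by
  by_contra hcon
  push_neg at hcon
  exact h ⟨hc, hcon⟩

lemma L0 (hb : IsBinary N) (f : V → V)
    (hf1 : ∀ r, IsRetic N r → N.Arc (f r) r ∧ IsTreeVert N (f r)) {v c : V}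
    (hv : IsTreeVert N v) (harc : N.Arc v c) (hc : IsRetic N c) (hnRt : ¬ Rt N c) :
    f c = v := by
  rcases not_Rt_exists N hc hnRt with ⟨w, hwc, hrw⟩
  have hvw : v ≠ w := fun e => treeVert_not_retic N hv (e ▸ hrw)
  rcases retic_two_parents N hb hc with ⟨a, b, hab, ha, hb', hcov⟩
  have h1 := hcov _ (hf1 c hc).1
  have h2 := hcov v harc
  have h3 := hcov w hwc
  have h4 : f c ≠ w := fun e => treeVert_not_retic N (hf1 c hc).2 (e ▸ hrw)
  rcases h1 with e1 | e1
  · rcases h2 with e2 | e2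
    · rw [e1, ← e2]
    · rcases h3 with e3 | e3
      · exact absurd (e1.trans e3.symm) h4
      · exact absurd (e2.trans e3.symm) hvw
  · rcases h2 with e2 | e2
    · rcases h3 with e3 | e3
      · exact absurd (e2.trans e3.symm) hvw
      · exact absurd (e1.trans e3.symm) h4
    · rw [e1, ← e2]

lemma retic_parent_unique (hb : IsBinary N) (f : V → V)
    (hf1 : ∀ r, IsRetic N r → N.Arc (f r) r ∧ IsTreeVert N (f r)) {v w c : V}
    (hvc : N.Arc v c) (hrv : IsRetic N v) (hwc : N.Arc w c) (hrw : IsRetic N w)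
    (hc : IsRetic N c) : v = w := by
  rcases retic_two_parents N hb hc with ⟨a, b, hab, ha, hb', hcov⟩
  have h1 := hcov _ (hf1 c hc).1
  have h2 := hcov v hvc
  have h3 := hcov w hwc
  have h4 : f c ≠ v := fun e => treeVert_not_retic N (hf1 c hc).2 (e ▸ hrv)
  have h5 : f c ≠ w := fun e => treeVert_not_retic N (hf1 c hc).2 (e ▸ hrw)
  rcases h1 with e1 | e1
  · rcases h2 with e2 | e2
    · exact absurd (e1.trans e2.symm) h4
    · rcases h3 with e3 | e3
      · exact absurd (e1.trans e3.symm) h5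
      · rw [e2, ← e3]
  · rcases h2 with e2 | e2
    · rcases h3 with e3 | e3
      · rw [e2, ← e3]
      · exact absurd (e1.trans e3.symm) h5
    · exact absurd (e1.trans e2.symm) h4

lemma B2 (hb : IsBinary N) (f : V → V)
    (hf1 : ∀ r, IsRetic N r → N.Arc (f r) r ∧ IsTreeVert N (f r))
    (hf2 : ∀ r1 r2, IsRetic N r1 → IsRetic N r2 → f r1 = f r2 → r1 = r2) :
    ∃ p, GoodP N p := by
  classical
  have hall : ∀ s : Finset {v : V // IsOmnian N v ∧ IsTreeVert N v},
      s.card ≤ (s.biUnion (fun i => chR1F N i.1)).card := by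
    intro s
    set S : Finset V := s.image Subtype.val with hSdef
    have hSprop : ∀ v ∈ S, IsOmnian N v ∧ IsTreeVert N v := by
      intro v hv
      rcases Finset.mem_image.1 hv with ⟨i, _, rfl⟩
      exact i.2
    have hScard : S.card = s.card := Finset.card_image_of_injective _ Subtype.val_injective
    have hNt : s.biUnion (fun i => chR1F N i.1) = S.biUnion (chR1F N) :=
      (Finset.image_biUnion).symm
    rw [hNt, ← hScard]
    set R' := S.biUnion (chR1F N) with hR'def
    have hsub : ∀ v ∈ S, chR1F N v ⊆ R' := fun v hv => Finset.subset_biUnion_of_mem _ hv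
    have hkey := sum_card_eq S R' (chR1F N) hsub
    -- children structure for members of S
    have hch : ∀ v ∈ S, ∃ a b, a ≠ b ∧ N.Arc v a ∧ N.Arc v b ∧
        (∀ u, N.Arc v u → u = a ∨ u = b) ∧ IsRetic N a ∧ IsRetic N b := by
      intro v hv
      rcases hSprop v hv with ⟨ho, ht⟩
      rcases out_two_members N hb (omnian_tree_out_two N hb ho ht) with
        ⟨a, b, hab, ha, hb', hcov⟩
      exact ⟨a, b, hab, ha, hb', hcov, ho.2 a ha, ho.2 b hb'⟩
    have hlow : S.card + (S.filter (fun v => ¬ HasR0 N v)).card ≤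
        ∑ v ∈ S, (chR1F N v).card := by
      have hbnd : ∀ v ∈ S, 1 + ite (¬ HasR0 N v) 1 0 ≤ (chR1F N v).card := by
        intro v hv
        rcases hSprop v hv with ⟨ho, ht⟩
        rcases hch v hv with ⟨a, b, hab, ha, hb', hcov, hra, hrb⟩
        by_cases h0 : HasR0 N v
        · simp only [if_neg (not_not_intro h0)]
          have : ∃ r, r ∈ chR1F N v := by
            by_cases hRa : Rt N a
            · exact ⟨a, (mem_chR1F N).2 ⟨ha, hRa⟩⟩
            · by_cases hRb : Rt N b
              · exact ⟨b, (mem_chR1F N).2 ⟨hb', hRb⟩⟩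
              · exfalso
                have e1 := L0 N hb f hf1 ht ha hra hRa
                have e2 := L0 N hb f hf1 ht hb' hrb hRb
                exact hab (hf2 a b hra hrb (e1.trans e2.symm))
          rcases this with ⟨r, hr⟩
          have := Finset.card_pos.2 ⟨r, hr⟩
          omega
        · simp only [if_pos h0]
          have hRa : Rt N a := by
            by_contra hRa
            exact h0 ⟨a, ha, hra, hRa⟩
          have hRb : Rt N b := by
            by_contra hRb
            exact h0 ⟨b, hb', hrb, hRb⟩
          have hss : ({a, b} : Finset V) ⊆ chR1F N v := by
            intro x hx
            rcases Finset.mem_insert.1 hx with rfl | hx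
            · exact (mem_chR1F N).2 ⟨ha, hRa⟩
            · rw [Finset.mem_singleton.1 hx]
              exact (mem_chR1F N).2 ⟨hb', hRb⟩
          have := Finset.card_le_card hss
          rw [Finset.card_pair hab] at this
          omega
      calc S.card + (S.filter (fun v => ¬ HasR0 N v)).card
          = ∑ v ∈ S, (1 + ite (¬ HasR0 N v) 1 0) := by
            rw [Finset.sum_add_distrib, Finset.sum_const, smul_eq_mul, mul_one,
              ← Finset.card_filter]
        _ ≤ _ := Finset.sum_le_sum hbnd
    have hR'Rt : ∀ r ∈ R', Rt N r := by
      intro r hr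
      rcases Finset.mem_biUnion.1 hr with ⟨v, _, hr'⟩
      exact ((mem_chR1F N).1 hr').2
    have hub : ∀ r ∈ R', (S.filter (fun v => r ∈ chR1F N v)).card ≤
        1 + ite (∀ u, N.Arc u r → u ∈ S) 1 0 := by
      intro r hr
      have hRt := hR'Rt r hr
      have heq : S.filter (fun v => r ∈ chR1F N v) = S.filter (fun v => N.Arc v r) := by
        apply Finset.filter_congr
        intro v hv
        simp [mem_chR1F, hRt]
      rw [heq]
      rcases retic_two_parents N hb hRt.1 with ⟨a, b, hab, ha, hb', hcov⟩
      by_cases hall' : ∀ u, N.Arc u r → u ∈ S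
      · have hss : S.filter (fun v => N.Arc v r) ⊆ {a, b} := by
          intro x hx
          rcases hcov x (Finset.mem_filter.1 hx).2 with rfl | rfl <;> simp
        have := Finset.card_le_card hss
        rw [Finset.card_pair hab] at this
        simp only [if_pos hall']
        omega
      · push_neg at hall'
        rcases hall' with ⟨u0, hu0arc, hu0S⟩
        have hcond : ¬ ∀ u, N.Arc u r → u ∈ S := by
          push_neg
          exact ⟨u0, hu0arc, hu0S⟩
        simp only [if_neg hcond]
        rcases hcov u0 hu0arc with rfl | rfl
        · have hss : S.filter (fun v => N.Arc v r) ⊆ {b} := by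
            intro x hx
            rcases Finset.mem_filter.1 hx with ⟨hxS, hxarc⟩
            rcases hcov x hxarc with rfl | rfl
            · exact absurd hxS hu0S
            · simp
          have := Finset.card_le_card hss
          rw [Finset.card_singleton] at this
          omega
        · have hss : S.filter (fun v => N.Arc v r) ⊆ {a} := by
            intro x hx
            rcases Finset.mem_filter.1 hx with ⟨hxS, hxarc⟩
            rcases hcov x hxarc with rfl | rfl
            · simp
            · exact absurd hxS hu0S
          have := Finset.card_le_card hss
          rw [Finset.card_singleton] at this
          omega
    have hT2 : (R'.filter (fun r => ∀ u, N.Arc u r → u ∈ S)).card ≤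
        (S.filter (fun v => ¬ HasR0 N v)).card := by
      apply Finset.card_le_card_of_injOn f
      · intro r hr
        rcases Finset.mem_filter.1 hr with ⟨hrR', hrall⟩
        have hRt := hR'Rt r hrR'
        have harc := (hf1 r hRt.1).1
        rw [Finset.mem_coe, Finset.mem_filter]
        refine ⟨hrall _ harc, ?_⟩
        rintro ⟨c, hfc, hcr, hcnRt⟩
        have := L0 N hb f hf1 (hf1 r hRt.1).2 hfc hcr hcnRt
        have e := hf2 c r hcr hRt.1 this
        rw [e] at hcnRt
        exact hcnRt hRt
      · intro r1 hr1 r2 hr2 heq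
        simp only [Finset.mem_coe, Finset.mem_filter] at hr1 hr2
        exact hf2 r1 r2 (hR'Rt r1 hr1.1).1 (hR'Rt r2 hr2.1).1 heq
    have hup : ∑ r ∈ R', (S.filter (fun v => r ∈ chR1F N v)).card ≤
        R'.card + (S.filter (fun v => ¬ HasR0 N v)).card := by
      calc ∑ r ∈ R', (S.filter (fun v => r ∈ chR1F N v)).card
          ≤ ∑ r ∈ R', (1 + ite (∀ u, N.Arc u r → u ∈ S) 1 0) := Finset.sum_le_sum hub
        _ = R'.card + (R'.filter (fun r => ∀ u, N.Arc u r → u ∈ S)).card := by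
            rw [Finset.sum_add_distrib, Finset.sum_const, smul_eq_mul, mul_one,
              ← Finset.card_filter]
        _ ≤ _ := by omega
    omega
  rcases (Finset.all_card_le_biUnion_card_iff_exists_injective
    (fun i : {v : V // IsOmnian N v ∧ IsTreeVert N v} => chR1F N i.1)).1 hall with
    ⟨h0, hinj, hmem⟩
  have hwex : ∀ r, IsRetic N r → ¬ Rt N r → ∃ w, N.Arc w r ∧ IsRetic N w :=
    fun r h1 h2 => not_Rt_exists N h1 h2
  refine ⟨fun r =>
    if hRt : Rt N r then
      (if hm : ∃ i : {v : V // IsOmnian N v ∧ IsTreeVert N v}, h0 i = r then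
        hm.choose.1 else f r)
    else if hr2 : IsRetic N r then Classical.choose (hwex r hr2 hRt) else r, ?_, ?_⟩
  · intro r hr
    by_cases hRt : Rt N r
    · simp only [dif_pos hRt]
      by_cases hm : ∃ i : {v : V // IsOmnian N v ∧ IsTreeVert N v}, h0 i = r
      · simp only [dif_pos hm]
        have := hmem hm.choose
        rw [hm.choose_spec] at this
        exact ((mem_chR1F N).1 this).1
      · simp only [dif_neg hm]
        exact (hf1 r hr).1
    · simp only [dif_neg hRt, dif_pos hr]
      exact (Classical.choose_spec (hwex r hr hRt)).1
  · intro v hv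
    by_cases hrv : IsRetic N v
    · -- v is a reticulation; its unique child
      rcases out_one_unique N (retic_outDeg N hrv) with ⟨c, hc, huniq⟩
      by_cases hrc : IsRetic N c
      · refine ⟨c, hc, Or.inr ?_⟩
        have hnRt : ¬ Rt N c := fun hRt => hRt.2 v hc hrv
        simp only [dif_neg hnRt, dif_pos hrc]
        have hspec := Classical.choose_spec (hwex c hrc hnRt)
        exact retic_parent_unique N hb f hf1 hspec.1 hspec.2 hc hrv hrc
      · exact ⟨c, hc, Or.inl hrc⟩
    · have ht : IsTreeVert N v := ⟨hv, by rw [IsRetic] at hrv; omega⟩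
      by_cases ho : IsOmnian N v
      · set i : {v : V // IsOmnian N v ∧ IsTreeVert N v} := ⟨v, ho, ht⟩ with hidef
        set r := h0 i with hrdef
        have hrmem := hmem i
        rw [← hrdef] at hrmem
        rcases (mem_chR1F N).1 hrmem with ⟨harc, hRt⟩
        refine ⟨r, harc, Or.inr ?_⟩
        have hm : ∃ j : {v : V // IsOmnian N v ∧ IsTreeVert N v}, h0 j = r := ⟨i, rfl⟩
        simp only [dif_pos hRt, dif_pos hm]
        have := hm.choose_spec
        exact congrArg Subtype.val (hinj (this.trans hrdef))
      · rw [IsOmnian] at ho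
        push_neg at ho
        rcases ho hv with ⟨c, hc, hcr⟩
        exact ⟨c, hc, Or.inl hcr⟩

end S14

/-- a binary network is tree-based iff `Z_N` has a matching of size `|R|`. -/
theorem stmt14 {V : Type*} [Fintype V] [DecidableEq V] (N : PhyloNet V)
    (hb : IsBinary N) :
    TreeBased N ↔
      ∃ M : Finset (V × V), IsMatchingOn (ZEdge N) M ∧
        M.card = {v | IsRetic N v}.ncard := by
  classical
  constructor
  · intro htb
    rcases (S14.treeBased_iff_good N).1 htb with ⟨p, hp⟩
    rcases S14.B1 N hb p hp with ⟨f, hf1, hf2⟩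
    refine ⟨(Finset.univ.filter (IsRetic N)).image (fun r => (f r, r)), ⟨?_, ?_⟩, ?_⟩
    · rintro e he
      rcases Finset.mem_image.1 he with ⟨r, hr, rfl⟩
      have hrr : IsRetic N r := (Finset.mem_filter.1 hr).2
      exact ⟨(hf1 r hrr).2, ⟨r, (hf1 r hrr).1, hrr⟩, hrr, (hf1 r hrr).1⟩
    · rintro e he e' he' hor
      rcases Finset.mem_image.1 he with ⟨r, hr, rfl⟩
      rcases Finset.mem_image.1 he' with ⟨r', hr', rfl⟩
      have hrr : IsRetic N r := (Finset.mem_filter.1 hr).2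
      have hrr' : IsRetic N r' := (Finset.mem_filter.1 hr').2
      have : r = r' := by
        rcases hor with h | h
        · exact hf2 r r' hrr hrr' h
        · exact h
      rw [this]
    · rw [S14.ncard_setOf]
      exact Finset.card_image_of_injective _ (fun a b h => congrArg Prod.snd h)
  · rintro ⟨M, ⟨hM1, hM2⟩, hMcard⟩
    have hcard2 : M.card = (Finset.univ.filter (IsRetic N)).card := by
      rw [hMcard, S14.ncard_setOf]
    have hinjOn : Set.InjOn (Prod.snd : V × V → V) (↑M : Set (V × V)) := by
      intro e he e' he' h
      exact hM2 e (Finset.mem_coe.1 he) e' (Finset.mem_coe.1 he') (Or.inr h)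
    have himg : M.image Prod.snd = Finset.univ.filter (IsRetic N) := by
      apply Finset.eq_of_subset_of_card_le
      · intro r hr
        rcases Finset.mem_image.1 hr with ⟨e, he, rfl⟩
        exact Finset.mem_filter.2 ⟨Finset.mem_univ _, (hM1 e he).2.2.1⟩
      · rw [Finset.card_image_of_injOn hinjOn]
        exact hcard2.ge
    have hex : ∀ r, IsRetic N r → ∃ e, e ∈ M ∧ e.2 = r := by
      intro r hr
      have : r ∈ M.image Prod.snd := by
        rw [himg]
        exact Finset.mem_filter.2 ⟨Finset.mem_univ _, hr⟩
      rcases Finset.mem_image.1 this with ⟨e, he, he2⟩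
      exact ⟨e, he, he2⟩
    choose e he1 he2 using fun r hr => (hex r hr)
    have hf1 : ∀ r, ∀ hr : IsRetic N r,
        N.Arc (e r hr).1 r ∧ IsTreeVert N (e r hr).1 := by
      intro r hr
      have hz := hM1 _ (he1 r hr)
      have h2 := he2 r hr
      rw [h2] at hz
      exact ⟨hz.2.2.2, hz.1⟩
    refine (S14.treeBased_iff_good N).2 ?_
    apply S14.B2 N hb (fun r => if hr : IsRetic N r then (e r hr).1 else r)
    · intro r hr
      simp only [dif_pos hr]
      exact hf1 r hr
    · intro r1 r2 h1 h2 heq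
      simp only [dif_pos h1, dif_pos h2] at heq
      have h := congrArg Prod.snd (hM2 _ (he1 r1 h1) _ (he1 r2 h2) (Or.inl heq))
      rw [he2 r1 h1, he2 r2 h2] at h
      exact h
end
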